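/- Let M be a free abelian group (free ℤ-module) of finite rank and let f : M → M be a group automorphism with f ∘ f = id. Then there exist natural numbers a, b, c and a group isomorphism e : M ≅ ℤ^a × ℤ^b × (ℤ × ℤ)^c under which f corresponds to the automorphism acting as the identity on the factor ℤ^a, as negation (x ↦ −x) on the factor ℤ^b, and as the coordinate swap (x, y) ↦ (y, x) on each of the c factors ℤ × ℤ. -/

import Mathlib

/- STATEMENT 0: Every involution `f` of a finitely generated free abelian group `M`
is, in suitable coordinates `M ≅ ℤᵃ × ℤᵇ × (ℤ × ℤ)ᶜ`, the automorphism acting as the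
identity on `ℤᵃ`, as negation on `ℤᵇ`, and as the coordinate swap on each `ℤ × ℤ` factor. -/

open Module

-- Bezout for finsets over ℤ
lemma bezout_finset {ι : Type*} [DecidableEq ι] (s : Finset ι) (c : ι → ℤ) :
    ∃ a : ι → ℤ, ∑ i ∈ s, a i * c i = s.gcd c := by
  classical
  induction s using Finset.induction with
  | empty => exact ⟨0, by simp⟩
  | insert x s hx ih =>
    obtain ⟨a, ha⟩ := ih
    refine ⟨fun j => if j = x then Int.gcdA (c x) (s.gcd c)
      else a j * Int.gcdB (c x) (s.gcd c), ?_⟩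
    rw [Finset.sum_insert hx, Finset.gcd_insert]
    have h2 : ∑ i ∈ s, (if i = x then Int.gcdA (c x) (s.gcd c)
        else a i * Int.gcdB (c x) (s.gcd c)) * c i
        = (∑ i ∈ s, a i * c i) * Int.gcdB (c x) (s.gcd c) := by
      rw [Finset.sum_mul]
      refine Finset.sum_congr rfl fun i hi => ?_
      rw [if_neg (by rintro rfl; exact hx hi)]; ring
    simp only [if_true, eq_self_iff_true, if_pos]
    rw [h2, ha]
    rw [← Int.coe_gcd, Int.gcd_eq_gcd_ab]
    ring

universe u

-- primitive part lemma
lemma prim {P : Type u} [AddCommGroup P] [Module.Free ℤ P]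
    [Module.Finite ℤ P] {x : P} (hx : ∀ w : P, x ≠ (2:ℤ) • w) :
    ∃ (d : ℤ) (m : P) (ψ : P →ₗ[ℤ] ℤ), x = d • m ∧ ψ m = 1 ∧ Odd d := by
  classical
  let b := Module.Free.chooseBasis ℤ P
  set ι := Module.Free.ChooseBasisIndex ℤ P
  let c : ι → ℤ := fun i => b.repr x i
  have hdvd : ∀ i : ι, Finset.univ.gcd c ∣ c i := fun i => Finset.gcd_dvd (Finset.mem_univ i)
  set d : ℤ := Finset.univ.gcd c with hd
  -- general division identity
  have key : ∀ t : ℤ, (∀ i : ι, t ∣ c i) → x = t • ∑ i : ι, (c i / t) • b i := by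
    intro t ht
    rw [Finset.smul_sum]
    conv_lhs => rw [← b.sum_repr x]
    refine Finset.sum_congr rfl fun i _ => ?_
    rw [smul_smul, Int.mul_ediv_cancel' (ht i)]
  -- d is odd
  have hodd : Odd d := by
    rw [← Int.not_even_iff_odd]
    intro he
    obtain ⟨e, hee⟩ := he
    refine hx (∑ i : ι, (c i / 2) • b i) (key 2 fun i => ?_)
    exact dvd_trans ⟨e, by omega⟩ (hdvd i)
  have hd0 : d ≠ 0 := by
    rintro h
    rw [h] at hodd
    simpa using hodd
  have hdm : x = d • (∑ i : ι, (c i / d) • b i) := key d hdvd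
  obtain ⟨a, ha⟩ := bezout_finset Finset.univ c
  refine ⟨d, ∑ i : ι, (c i / d) • b i, ∑ i : ι, a i • (b.coord i), hdm, ?_, hodd⟩
  have hψx : (∑ i : ι, a i • (b.coord i) : P →ₗ[ℤ] ℤ) x = d := by
    simp only [LinearMap.sum_apply, LinearMap.smul_apply, Basis.coord_apply, smul_eq_mul]
    rw [hd, ← ha]
  have := hψx
  rw [hdm, map_smul, smul_eq_mul] at this
  exact mul_left_cancel₀ hd0 (by rw [this, mul_one])

noncomputable def splitEquiv {P : Type u} [AddCommGroup P] (ψ : P →ₗ[ℤ] ℤ) (m : P)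
    (hm : ψ m = 1) : P ≃+ ℤ × LinearMap.ker ψ where
  toFun p := (ψ p, ⟨p - ψ p • m, by simp [LinearMap.mem_ker, map_sub, map_smul, hm, smul_eq_mul]⟩)
  invFun z := z.1 • m + z.2.1
  left_inv p := by simp
  right_inv z := by
    have hz : ψ z.2.1 = 0 := z.2.2
    refine Prod.ext ?_ (Subtype.ext ?_)
    · simp [map_add, map_smul, hm, hz, smul_eq_mul]
    · simp [map_add, map_smul, hm, hz, smul_eq_mul]
  map_add' p p' := by
    refine Prod.ext ?_ (Subtype.ext ?_)
    · simp [map_add]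
    · simp [map_add, add_smul]; abel

@[simp] lemma splitEquiv_fst {P : Type u} [AddCommGroup P] (ψ : P →ₗ[ℤ] ℤ) (m : P)
    (hm : ψ m = 1) (p : P) : (splitEquiv ψ m hm p).1 = ψ p := rfl

@[simp] lemma splitEquiv_snd {P : Type u} [AddCommGroup P] (ψ : P →ₗ[ℤ] ℤ) (m : P)
    (hm : ψ m = 1) (p : P) : ((splitEquiv ψ m hm p).2 : P) = p - ψ p • m := rfl

def consEquiv (a b c : ℕ) :
    ((ℤ × ℤ) × ((Fin a → ℤ) × (Fin b → ℤ) × (Fin c → ℤ × ℤ))) ≃+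
      ((Fin a → ℤ) × (Fin b → ℤ) × (Fin (c+1) → ℤ × ℤ)) where
  toFun x := (x.2.1, x.2.2.1, Fin.cons x.1 x.2.2.2)
  invFun y := (y.2.2 0, y.1, y.2.1, fun i => y.2.2 i.succ)
  left_inv x := by
    refine Prod.ext (by simp) (Prod.ext rfl (Prod.ext rfl ?_))
    funext i; simp
  right_inv y := by
    refine Prod.ext rfl (Prod.ext rfl ?_)
    funext i
    refine Fin.cases ?_ ?_ i <;> simp
  map_add' x y := by
    refine Prod.ext rfl (Prod.ext rfl ?_)
    funext i
    refine Fin.cases ?_ ?_ i <;> simp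

lemma cons_swap (a b c : ℕ) (u : ℤ × ℤ) (Z : Fin c → ℤ × ℤ) :
    (Fin.cons u.swap (fun i => (Z i).swap) : Fin (c+1) → ℤ × ℤ)
      = fun i => ((Fin.cons u Z : Fin (c+1) → ℤ × ℤ) i).swap := by
  funext i
  refine Fin.cases ?_ ?_ i <;> simp

lemma lemC {P Q : Type u} [AddCommGroup P] [AddCommGroup Q]
    [Module.Free ℤ P] [Module.Finite ℤ P] [Module.Free ℤ Q] [Module.Finite ℤ Q]
    (Φ τ : Q →ₗ[ℤ] P) (hτ : ∀ q, Φ q = (2:ℤ) • τ q) :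
    ∃ (a b c : ℕ) (e : (P × Q) ≃+ ((Fin a → ℤ) × (Fin b → ℤ) × (Fin c → ℤ × ℤ))),
      ∀ (p : P) (q : Q), e (p + Φ q, -q)
        = ((e (p,q)).1, -(e (p,q)).2.1, fun i => ((e (p,q)).2.2 i).swap) := by
  classical
  let eP := ((Module.Free.chooseBasis ℤ P).reindex
    (Fintype.equivFin (Module.Free.ChooseBasisIndex ℤ P))).equivFun
  let eQ := ((Module.Free.chooseBasis ℤ Q).reindex
    (Fintype.equivFin (Module.Free.ChooseBasisIndex ℤ Q))).equivFun
  refine ⟨_, _, 0, AddEquiv.mk' (Equiv.mk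
      (fun x => (eP (x.1 + τ x.2), eQ x.2, fun i => i.elim0))
      (fun y => (eP.symm y.1 - τ (eQ.symm y.2.1), eQ.symm y.2.1))
      (fun x => by simp)
      (fun y => by
        refine Prod.ext (by simp) (Prod.ext (by simp) ?_)
        funext i; exact i.elim0))
    (fun x y => by
      refine Prod.ext ?_ (Prod.ext ?_ ?_)
      · show eP ((x.1 + y.1) + τ (x.2 + y.2)) = eP (x.1 + τ x.2) + eP (y.1 + τ y.2)
        rw [← map_add]
        congr 1
        rw [map_add]
        abel
      · exact map_add eQ x.2 y.2
      · funext i; exact i.elim0), ?_⟩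
  intro p q
  refine Prod.ext ?_ (Prod.ext ?_ ?_)
  · show eP (p + Φ q + τ (-q)) = eP (p + τ q)
    congr 1
    rw [hτ, map_neg, two_smul]
    abel
  · show eQ (-q) = -(eQ q)
    exact map_neg eQ q
  · funext i; exact i.elim0

theorem lemA (n : ℕ) : ∀ (P Q : Type u) [AddCommGroup P] [AddCommGroup Q]
    [Module.Free ℤ P] [Module.Finite ℤ P] [Module.Free ℤ Q] [Module.Finite ℤ Q]
    (Φ : Q →ₗ[ℤ] P), Module.finrank ℤ Q ≤ n →
    ∃ (a b c : ℕ) (e : (P × Q) ≃+ ((Fin a → ℤ) × (Fin b → ℤ) × (Fin c → ℤ × ℤ))),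
      ∀ (p : P) (q : Q), e (p + Φ q, -q)
        = ((e (p,q)).1, -(e (p,q)).2.1, fun i => ((e (p,q)).2.2 i).swap) := by
  induction n with
  | zero =>
    intro P Q _ _ _ _ _ _ Φ hn
    haveI : Subsingleton Q := by
      rw [← Module.finrank_zero_iff (R := ℤ) (M := Q)]; omega
    exact lemC Φ 0 (fun q => by rw [Subsingleton.elim q 0]; simp)
  | succ n ih =>
    intro P Q _ _ _ _ _ _ Φ hn
    classical
    let bQ := Module.Free.chooseBasis ℤ Q
    by_cases hall : ∀ j, ∃ w, Φ (bQ j) = (2:ℤ) • w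
    · choose w hw using hall
      refine lemC Φ (bQ.constr ℤ w) (fun q => ?_)
      have h2 : Φ = (2:ℤ) • (bQ.constr ℤ w) := by
        apply bQ.ext
        intro j
        rw [LinearMap.smul_apply, Basis.constr_basis]
        exact hw j
      rw [h2]; rfl
    · push_neg at hall
      obtain ⟨j₀, hj₀⟩ := hall
      obtain ⟨d, m, ψ, hdm, hψm, hodd⟩ := prim (x := Φ (bQ j₀)) hj₀
      obtain ⟨k, hk⟩ := hodd
      set τ : Q →ₗ[ℤ] P := (bQ.coord j₀).smulRight (k • m) with hτdef
      set Φ' : Q →ₗ[ℤ] P := Φ - (2:ℤ) • τ with hΦ'def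
      have hΦ'v : Φ' (bQ j₀) = m := by
        rw [hΦ'def]
        simp only [LinearMap.sub_apply, LinearMap.smul_apply, hτdef,
          LinearMap.smulRight_apply, Basis.coord_apply, Basis.repr_self_apply]
        rw [hdm, hk]
        norm_num
        module
      set μ : Q →ₗ[ℤ] ℤ := ψ.comp Φ' with hμdef
      have hμv : μ (bQ j₀) = 1 := by rw [hμdef]; simp [hΦ'v, hψm]
      set P₀ := LinearMap.ker ψ with hP₀
      set Q₀ := LinearMap.ker μ with hQ₀
      have hmaps : ∀ q ∈ Q₀, Φ' q ∈ P₀ := by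
        intro q hq
        simpa [hP₀, hQ₀, hμdef, LinearMap.mem_ker] using hq
      set Φ₀ : Q₀ →ₗ[ℤ] P₀ := Φ'.restrict hmaps with hΦ₀def
      set eP := splitEquiv ψ m hψm with hePdef
      set eQ := splitEquiv μ (bQ j₀) hμv with heQdef
      have hrank : Module.finrank ℤ Q₀ ≤ n := by
        have h1 : Module.finrank ℤ Q = Module.finrank ℤ (ℤ × Q₀) :=
          eQ.toIntLinearEquiv.finrank_eq
        rw [Module.finrank_prod, Module.finrank_self] at h1
        omega
      obtain ⟨a, b, c, e₀, he₀⟩ := ih P₀ Q₀ Φ₀ hrank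
      -- assembly
      let T : (P × Q) ≃+ (P × Q) := AddEquiv.mk' (Equiv.mk
        (fun x => (x.1 + τ x.2, x.2)) (fun x => (x.1 - τ x.2, x.2))
        (fun x => by simp) (fun x => by simp))
        (fun x y => by
          refine Prod.ext ?_ rfl
          show x.1 + y.1 + τ (x.2 + y.2) = (x.1 + τ x.2) + (y.1 + τ y.2)
          rw [map_add]; abel)
      let R : ((ℤ × P₀) × (ℤ × Q₀)) ≃+ ((ℤ × ℤ) × (P₀ × Q₀)) := AddEquiv.mk' (Equiv.mk
        (fun x => ((x.1.1, x.2.1), (x.1.2, x.2.2)))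
        (fun x => ((x.1.1, x.2.1), (x.1.2, x.2.2)))
        (fun x => rfl) (fun x => rfl)) (fun x y => rfl)
      let W : (ℤ × ℤ) ≃+ (ℤ × ℤ) := AddEquiv.mk' (Equiv.mk
        (fun x => (x.1 + x.2, x.1)) (fun y => (y.2, y.1 - y.2))
        (fun x => by simp) (fun y => by simp))
        (fun x y => by refine Prod.ext ?_ rfl; show _ = _; simp; ring)
      let tail := (eP.prodCongr eQ).trans (R.trans ((W.prodCongr e₀).trans (consEquiv a b c)))
      have c1 : ∀ (p : P) (q : Q), eP (p + Φ' q) = (ψ p + μ q, (eP p).2 + Φ₀ (eQ q).2) := by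
        intro p q
        refine Prod.ext ?_ (Subtype.ext ?_)
        · show ψ (p + Φ' q) = ψ p + μ q
          rw [map_add]; rfl
        · show (p + Φ' q) - ψ (p + Φ' q) • m = ((p - ψ p • m) + (Φ' (q - μ q • bQ j₀) : P))
          rw [map_sub, map_smul, hΦ'v, map_add, show ψ (Φ' q) = μ q from rfl, add_smul]
          abel
      have c2 : ∀ (q : Q), eQ (-q) = (-(μ q), -(eQ q).2) := by
        intro q
        refine Prod.ext ?_ (Subtype.ext ?_)
        · show μ (-q) = -(μ q); rw [map_neg]
        · show (-q) - μ (-q) • bQ j₀ = -(q - μ q • bQ j₀)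
          rw [map_neg]; module
      have tapp : ∀ (u : P) (v : Q), tail (u, v)
          = consEquiv a b c (W ((eP u).1, (eQ v).1), e₀ ((eP u).2, (eQ v).2)) := by
        intro u v; rfl
      have hWs : ∀ s t : ℤ, W (s + t, -t) = (s, s + t) := by
        intro s t
        refine Prod.ext ?_ rfl
        show s + t + -t = s; ring
      have tailEq : ∀ (p : P) (q : Q), tail (p + Φ' q, -q)
          = ((tail (p,q)).1, -(tail (p,q)).2.1, fun i => ((tail (p,q)).2.2 i).swap) := by
        intro p q
        rw [tapp, tapp, c1, c2]
        show consEquiv a b c (W (ψ p + μ q, -(μ q)),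
            e₀ ((eP p).2 + Φ₀ (eQ q).2, -(eQ q).2)) = _
        rw [hWs, he₀]
        have hW2 : W ((eP p).1, (eQ q).1) = (ψ p + μ q, ψ p) := rfl
        rw [hW2]
        refine Prod.ext rfl (Prod.ext rfl ?_)
        have hcs := cons_swap a b c (ψ p + μ q, ψ p) (e₀ ((eP p).2, (eQ q).2)).2.2
        simpa [Prod.swap, consEquiv] using hcs
      refine ⟨a, b, c+1, T.trans tail, fun p q => ?_⟩
      have hT1 : T (p + Φ q, -q) = ((p + τ q) + Φ' q, -q) := by
        refine Prod.ext ?_ rfl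
        show p + Φ q + τ (-q) = (p + τ q) + Φ' q
        rw [hΦ'def, map_neg]
        simp only [LinearMap.sub_apply, LinearMap.smul_apply]
        module
      simp only [AddEquiv.trans_apply]
      rw [hT1, tailEq (p + τ q) q]
      rfl

theorem stmt_0 (M : Type*) [AddCommGroup M] [Module.Free ℤ M] [Module.Finite ℤ M]
    (f : M ≃+ M) (hf : ∀ x : M, f (f x) = x) :
    ∃ (a b c : ℕ) (e : M ≃+ ((Fin a → ℤ) × (Fin b → ℤ) × (Fin c → ℤ × ℤ))),
      ∀ x : M,
        e (f x) = ((e x).1, -(e x).2.1, fun i => ((e x).2.2 i).swap) := by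
  classical
  set fl : M →ₗ[ℤ] M := f.toAddMonoidHom.toIntLinearMap with hfl
  set P : Submodule ℤ M := LinearMap.ker (fl - LinearMap.id) with hPdef
  have hPmem : ∀ x : M, x ∈ P ↔ f x = x := by
    intro x
    rw [hPdef, LinearMap.mem_ker, LinearMap.sub_apply, LinearMap.id_apply, sub_eq_zero]
    rfl
  haveI : NoZeroSMulDivisors ℤ (M ⧸ P) := by
    constructor
    intro c x hcx
    by_cases hc : c = 0
    · exact Or.inl hc
    refine Or.inr ?_
    obtain ⟨y, rfl⟩ := Submodule.Quotient.mk_surjective P x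
    rw [← Submodule.Quotient.mk_smul, Submodule.Quotient.mk_eq_zero, hPmem] at hcx
    rw [map_zsmul] at hcx
    have h1 : c • (f y - y) = 0 := by rw [smul_sub, hcx, sub_self]
    have h2 : f y - y = 0 := (smul_eq_zero.mp h1).resolve_left hc
    rw [Submodule.Quotient.mk_eq_zero, hPmem, ← sub_eq_zero]
    exact h2
  let bQ := Module.Free.chooseBasis ℤ (M ⧸ P)
  set σ : (M ⧸ P) →ₗ[ℤ] M :=
    bQ.constr ℤ (fun j => (Submodule.Quotient.mk_surjective P (bQ j)).choose) with hσdef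
  have hσ : ∀ q, P.mkQ (σ q) = q := by
    have hcomp : P.mkQ.comp σ = LinearMap.id := by
      apply bQ.ext
      intro j
      rw [LinearMap.comp_apply, hσdef, Basis.constr_basis, LinearMap.id_apply,
        Submodule.mkQ_apply]
      exact (Submodule.Quotient.mk_surjective P (bQ j)).choose_spec
    intro q
    exact LinearMap.congr_fun hcomp q
  have hfix : ∀ x : M, x ∈ P → f x = x := fun x hx => (hPmem x).1 hx
  have hmk_f : ∀ y : M, P.mkQ (f y) = - P.mkQ y := by
    intro y
    have hmem : f y + y ∈ P := by
      rw [hPmem, map_add, hf]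
      abel
    have h0 : P.mkQ (f y + y) = 0 := by
      rw [Submodule.mkQ_apply, Submodule.Quotient.mk_eq_zero]
      exact hmem
    rw [map_add] at h0
    exact eq_neg_of_add_eq_zero_left h0
  have hmemE : ∀ y : M, y - σ (P.mkQ y) ∈ P := by
    intro y
    have h0 : P.mkQ (y - σ (P.mkQ y)) = 0 := by
      rw [map_sub, hσ, sub_self]
    rwa [Submodule.mkQ_apply, Submodule.Quotient.mk_eq_zero] at h0
  set Φ : (M ⧸ P) →ₗ[ℤ] P := LinearMap.codRestrict P (σ + fl.comp σ) (fun q => by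
    rw [hPmem]
    show f (σ q + f (σ q)) = σ q + f (σ q)
    rw [map_add, hf]
    abel) with hΦdef
  have hΦcoe : ∀ q, (Φ q : M) = σ q + f (σ q) := fun q => rfl
  set E : M ≃+ (↥P × (M ⧸ P)) := AddEquiv.mk' (Equiv.mk
      (fun y => (⟨y - σ (P.mkQ y), hmemE y⟩, P.mkQ y))
      (fun z => (z.1 : M) + σ z.2)
      (fun y => by simp)
      (fun z => by
        have hz1 : P.mkQ ((z.1 : M) + σ z.2) = z.2 := by
          have : P.mkQ (z.1 : M) = 0 := by
            rw [Submodule.mkQ_apply, Submodule.Quotient.mk_eq_zero]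
            exact z.1.2
          rw [map_add, this, hσ, zero_add]
        refine Prod.ext (Subtype.ext ?_) hz1
        show (z.1 : M) + σ z.2 - σ (P.mkQ ((z.1 : M) + σ z.2)) = (z.1 : M)
        rw [hz1]
        abel))
    (fun x y => by
      refine Prod.ext (Subtype.ext ?_) (map_add _ x y)
      show (x + y) - σ (P.mkQ (x + y)) = (x - σ (P.mkQ x)) + (y - σ (P.mkQ y))
      rw [map_add, map_add]
      abel) with hEdef
  have hE1 : ∀ x : M, ((E x).1 : M) = x - σ (P.mkQ x) := fun x => rfl
  have hE2 : ∀ x : M, (E x).2 = P.mkQ x := fun x => rfl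
  have hE : ∀ x : M, E (f x) = ((E x).1 + Φ (E x).2, -(E x).2) := by
    intro x
    refine Prod.ext (Subtype.ext ?_) ?_
    · show f x - σ (P.mkQ (f x)) = ((x - σ (P.mkQ x)) + (σ (P.mkQ x) + f (σ (P.mkQ x))))
      rw [hmk_f, map_neg]
      have hfx := hfix _ (hmemE x)
      rw [map_sub] at hfx
      have h3 := sub_eq_sub_iff_add_eq_add.mp hfx
      rw [sub_neg_eq_add, h3]
      abel
    · show P.mkQ (f x) = -(P.mkQ x)
      exact hmk_f x
  obtain ⟨a, b, c, e, he⟩ := lemA (Module.finrank ℤ (M ⧸ P)) (↥P) (M ⧸ P) Φ le_rfl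
  refine ⟨a, b, c, E.trans e, fun x => ?_⟩
  simp only [AddEquiv.trans_apply]
  rw [hE, he]
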